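/- If G is an interval graph arising from a family of intervals whose associated interval order ≺ (I ≺ J iff the right endpoint of I is less than the left endpoint of J) has an ordered clique cover of G of length l(G,G), then the order dimension of ≺ is at most l(G,G) + 2. -/

import Mathlib

/-- For an interval graph `G` given by intervals `[lo i, hi i]`, with the interval
order `≺` (`i ≺ j` iff `hi i < lo j`), if `G` has an ordered clique cover of
length at most `l`, then the order dimension of `≺` is at most `l + 2`: there are
`l + 2` strict linear orders whose intersection is `≺`. -/
theorem interval_order_dimension {ι : Type*} [Fintype ι]
    (lo hi : ι → ℝ) (hlh : ∀ i, lo i ≤ hi i)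
    (k l : ℕ) (C : Fin k → Finset ι)
    (hclique : ∀ m : Fin k, ∀ i ∈ C m, ∀ j ∈ C m, i ≠ j →
      (Set.Icc (lo i) (hi i) ∩ Set.Icc (lo j) (hi j)).Nonempty)
    (hcover : ∀ i : ι, ∃ m, i ∈ C m)
    (hdisj : ∀ m m' : Fin k, m ≠ m' → Disjoint (C m) (C m'))
    (hlen : ∀ i j : ι, i ≠ j →
      (Set.Icc (lo i) (hi i) ∩ Set.Icc (lo j) (hi j)).Nonempty →
      ∀ s t : Fin k, i ∈ C s → j ∈ C t →
        |((s : ℕ) : ℤ) - ((t : ℕ) : ℤ)| ≤ l) :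
    ∃ L : Fin (l + 2) → ι → ι → Prop,
      (∀ m, IsStrictTotalOrder ι (L m)) ∧
      ∀ i j : ι, hi i < lo j ↔ ∀ m, L m i j := by
  classical
  -- enumeration of ι
  set e : ι → ℕ := fun i => (Fintype.equivFin ι i : ℕ) with he_def
  have he : Function.Injective e := fun a b h =>
    (Fintype.equivFin ι).injective (Fin.val_injective h)
  -- clique assignment
  choose cl hcl using hcover
  -- Helly point of each clique
  set p : Fin k → ℝ := fun q => if h : (C q).Nonempty then (C q).sup' h lo else 0 with hp_def
  have hp1 : ∀ q : Fin k, ∀ i ∈ C q, lo i ≤ p q := by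
    intro q i hiq
    have hne : (C q).Nonempty := ⟨i, hiq⟩
    simp only [hp_def]
    rw [dif_pos hne]
    exact Finset.le_sup' lo hiq
  have hp2 : ∀ q : Fin k, ∀ j ∈ C q, p q ≤ hi j := by
    intro q j hjq
    have hne : (C q).Nonempty := ⟨j, hjq⟩
    simp only [hp_def]
    rw [dif_pos hne]
    apply Finset.sup'_le
    intro i hiq
    by_cases hij : i = j
    · subst hij; exact hlh i
    · obtain ⟨x, hx1, hx2⟩ := hclique q i hiq j hjq hij
      exact le_trans hx1.1 hx2.2
  -- residue of the clique index
  set r : ι → ℕ := fun i => (cl i : ℕ) % (l + 1) with hr_def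
  have hrlt : ∀ i, r i < l + 1 := fun i => Nat.mod_lt _ (Nat.succ_pos l)
  -- the keys
  set K : Fin (l + 2) → ι → ℝ ×ₗ (ℝ ×ₗ ℤ) := fun b i =>
    if (b : ℕ) = l + 1 then toLex (p (cl i), toLex (-hi i, -(e i : ℤ)))
    else toLex ((if r i = (b : ℕ) then hi i else lo i),
      toLex (0, if r i = (b : ℕ) then (e i : ℤ) else -(e i : ℤ) - 1)) with hK_def
  -- injectivity of each key
  have hKinj : ∀ b : Fin (l + 2), Function.Injective (K b) := by
    intro b x y hxy
    by_cases hb : (b : ℕ) = l + 1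
    · simp only [hK_def, if_pos hb, toLex_inj, Prod.mk.injEq] at hxy
      have h3 := hxy.2.2
      exact he (by omega)
    · simp only [hK_def, if_neg hb, toLex_inj, Prod.mk.injEq] at hxy
      have h3 := hxy.2.2
      split_ifs at h3 <;> exact he (by omega)
  refine ⟨fun b i j => K b i < K b j, ?_, ?_⟩
  · intro b
    refine { trichotomous := fun x y hxy hyx => ?_,
             toIsStrictOrder :=
               { irrefl := fun a => lt_irrefl _,
                 toIsTrans := ⟨fun a b' c h1 h2 => lt_trans h1 h2⟩ } }
    rcases lt_trichotomy (K b x) (K b y) with h | h | h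
    · exact absurd h hxy
    · exact hKinj b h
    · exact absurd h hyx
  · -- forward direction
    have hfwd : ∀ x y : ι, hi x < lo y → ∀ b, K b x < K b y := by
      intro x y hxy b
      by_cases hb : (b : ℕ) = l + 1
      · simp only [hK_def, if_pos hb]
        rw [Prod.Lex.lt_iff]
        left
        calc p (cl x) ≤ hi x := hp2 (cl x) x (hcl x)
          _ < lo y := hxy
          _ ≤ p (cl y) := hp1 (cl y) y (hcl y)
      · simp only [hK_def, if_neg hb]
        rw [Prod.Lex.lt_iff]
        left
        have h1 : (if r x = (b : ℕ) then hi x else lo x) ≤ hi x := by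
          split_ifs
          · exact le_rfl
          · exact hlh x
        have h2 : lo y ≤ (if r y = (b : ℕ) then hi y else lo y) := by
          split_ifs
          · exact hlh y
          · exact le_rfl
        calc (if r x = (b : ℕ) then hi x else lo x) ≤ hi x := h1
          _ < lo y := hxy
          _ ≤ _ := h2
    intro i j
    constructor
    · exact fun h b => hfwd i j h b
    · intro h
      by_contra h0
      -- i ≠ j
      have hij : i ≠ j := by
        rintro rfl
        exact lt_irrefl _ (h 0)
      -- j is not entirely left of i
      have hji : ¬ hi j < lo i := by
        intro hji'
        exact lt_asymm (h 0) (hfwd j i hji' 0)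
      push_neg at h0 hji
      -- intervals overlap
      have hover : (Set.Icc (lo i) (hi i) ∩ Set.Icc (lo j) (hi j)).Nonempty := by
        refine ⟨max (lo i) (lo j), ⟨le_max_left _ _, ?_⟩, ⟨le_max_right _ _, ?_⟩⟩
        · exact max_le (hlh i) h0
        · exact max_le hji (hlh j)
      have hst := hlen i j hij hover (cl i) (cl j) (hcl i) (hcl j)
      -- the key order with index r i
      have hri : r i < l + 2 := lt_trans (hrlt i) (Nat.lt_succ_self _)
      set b₀ : Fin (l + 2) := ⟨r i, hri⟩ with hb₀
      have hb₀ne : (b₀ : ℕ) ≠ l + 1 := by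
        have := hrlt i
        simp only [hb₀]
        omega
      have hb₀val : (b₀ : ℕ) = r i := rfl
      by_cases hcc : cl i = cl j
      · -- same clique: use L b₀ and the last order
        have hrj : r j = r i := by simp only [hr_def, hcc]
        have h1 := h b₀
        simp only [hK_def, if_neg hb₀ne, hb₀val, hrj, if_pos rfl, if_true, eq_self_iff_true,
          Prod.Lex.lt_iff, ofLex_toLex] at h1
        set bR : Fin (l + 2) := ⟨l + 1, Nat.lt_succ_self _⟩ with hbR
        have h2 := h bR
        have hbRval : (bR : ℕ) = l + 1 := rfl
        simp only [hK_def, hbRval, if_pos rfl, if_true, eq_self_iff_true, hcc,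
          Prod.Lex.lt_iff, ofLex_toLex] at h2
        rcases h2 with h2 | ⟨-, h2⟩
        · exact lt_irrefl _ h2
        · rcases h1 with h1 | ⟨h1e, h1⟩ <;> rcases h2 with h2 | ⟨h2e, h2⟩
          · linarith
          · linarith
          · linarith
          · rcases h1 with h1 | ⟨-, h1⟩
            · exact lt_irrefl _ h1
            · omega
      · -- different cliques: residues differ
        have hvne : (cl i : ℕ) ≠ (cl j : ℕ) := fun hv => hcc (Fin.val_injective hv)
        have hrne : r j ≠ r i := by
          intro hrr
          have hmod : Nat.ModEq (l + 1) (cl j : ℕ) (cl i : ℕ) := hrr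
          have hdvd : ((l : ℤ) + 1) ∣ ((cl i : ℕ) : ℤ) - ((cl j : ℕ) : ℤ) := by
            have := hmod.dvd
            exact_mod_cast this
          have habs : ((l : ℤ) + 1) ∣ |((cl i : ℕ) : ℤ) - ((cl j : ℕ) : ℤ)| :=
            (dvd_abs _ _).mpr hdvd
          have hpos : 0 < |((cl i : ℕ) : ℤ) - ((cl j : ℕ) : ℤ)| := by
            rw [abs_pos, sub_ne_zero]
            exact_mod_cast hvne
          have := Int.le_of_dvd hpos habs
          omega
        have h1 := h b₀
        simp only [hK_def, if_neg hb₀ne, hb₀val, if_pos rfl, if_true, eq_self_iff_true,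
          if_neg hrne, Prod.Lex.lt_iff, ofLex_toLex] at h1
        rcases h1 with h1 | ⟨h1e, h1⟩
        · exact absurd h1 (not_lt.mpr h0)
        · rcases h1 with h1 | ⟨-, h1⟩
          · exact lt_irrefl _ h1
          · omega
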